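/- (Per-coordinate variance of the two-point zeroth-order estimator; step in the proof of Proposition 1.) Let z be a random vector in ℝ^d whose coordinates are independent and identically distributed with mean 0, variance 1 and finite fourth moment, and set β := Var[z_1²]. Let g be a random vector in ℝ^d with finite second moments, defined on the same probability space and independent of z. Then for every coordinate i ∈ {1,…,d}: Var[(⟨g, z⟩ z)_i] = β · Var[g_i] + (β − 1) · (E[g_i])² + Σ_{j=1}^d E[g_j²]. -/

import Mathlib

open MeasureTheory ProbabilityTheory
open scoped BigOperators
open scoped ENNReal

lemma memLp_mul' {Ω : Type*} [MeasurableSpace Ω] {μ : Measure Ω} {f g : Ω → ℝ}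
    {p q r : ℝ≥0∞} (hf : MemLp f q μ) (hg : MemLp g r μ) (h : 1/p = 1/q + 1/r) :
    MemLp (fun ω => f ω * g ω) p μ := by
  haveI : ENNReal.HolderTriple q r p := ⟨by simpa [one_div] using h.symm⟩
  simpa [smul_eq_mul, Pi.mul_def] using hg.smul hf

lemma ennreal_half_quarter : (1:ℝ≥0∞)/2 = 1/4 + 1/4 := by
  rw [ENNReal.div_add_div_same,
    ENNReal.div_eq_div_iff (by norm_num) (by norm_num) (by norm_num) (by norm_num)]
  norm_num

lemma ennreal_one_half : (1:ℝ≥0∞)/1 = 1/2 + 1/2 := by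
  rw [ENNReal.div_add_div_same,
    ENNReal.div_eq_div_iff (by norm_num) (by norm_num) (by norm_num) (by norm_num)]
  norm_num

lemma integral_mul_indep' {Ω : Type*} [MeasurableSpace Ω] {μ : Measure Ω} {X Y : Ω → ℝ}
    (h : IndepFun X Y μ) (hX : AEStronglyMeasurable X μ) (hY : AEStronglyMeasurable Y μ) :
    ∫ ω, X ω * Y ω ∂μ = (∫ ω, X ω ∂μ) * ∫ ω, Y ω ∂μ :=
  h.integral_mul_eq_mul_integral hX hY

lemma integrable_mul_indep' {Ω : Type*} [MeasurableSpace Ω] {μ : Measure Ω} {X Y : Ω → ℝ}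
    (h : IndepFun X Y μ) (hX : Integrable X μ) (hY : Integrable Y μ) :
    Integrable (fun ω => X ω * Y ω) μ :=
  h.integrable_mul hX hY

/-- **per-coordinate variance of the two-point ZO estimator.**
For `z` with i.i.d. coordinates of mean `0`, variance `1` and finite fourth
moment, `β := Var[z₁²]`, and `g` with finite second moments independent of `z`,
`Var[(⟪g,z⟫ z)_i] = β Var[g_i] + (β-1) (E[g_i])² + ∑_j E[g_j²]` for each `i`,
where `(⟪g,z⟫ z)_i = (∑_j g_j z_j) z_i`. -/
theorem stmt6 {Ω : Type*} [MeasurableSpace Ω] {μ : Measure Ω} [IsProbabilityMeasure μ]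
    {d : ℕ} (z g : Ω → Fin d → ℝ) (β : ℝ)
    (hzm : Measurable z) (hgm : Measurable g)
    (hzindep : iIndepFun (fun i ω => z ω i) μ)
    (hzid : ∀ i j, IdentDistrib (fun ω => z ω i) (fun ω => z ω j) μ μ)
    (hmean : ∀ i, ∫ ω, z ω i ∂μ = 0)
    (hvar : ∀ i, variance (fun ω => z ω i) μ = 1)
    (hmom4 : ∀ i, MemLp (fun ω => z ω i) 4 μ)
    (hβ : ∀ i, variance (fun ω => (z ω i) ^ 2) μ = β)
    (hg2 : ∀ i, MemLp (fun ω => g ω i) 2 μ)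
    (hindep : IndepFun g z μ) :
    ∀ i, variance (fun ω => (∑ j, g ω j * z ω j) * z ω i) μ
      = β * variance (fun ω => g ω i) μ + (β - 1) * (∫ ω, g ω i ∂μ) ^ 2
        + ∑ j, ∫ ω, (g ω j) ^ 2 ∂μ := by
  intro i
  have hZm : ∀ j, Measurable (fun ω => z ω j) := fun j => (measurable_pi_apply j).comp hzm
  have hGm : ∀ j, Measurable (fun ω => g ω j) := fun j => (measurable_pi_apply j).comp hgm
  have hz2 : ∀ j, MemLp (fun ω => z ω j) 2 μ := fun j =>
    (hmom4 j).mono_exponent (by norm_num)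
  have hzz : ∀ j k, MemLp (fun ω => z ω j * z ω k) 2 μ := fun j k =>
    memLp_mul' (hmom4 j) (hmom4 k) ennreal_half_quarter
  -- E[z_j²] = 1
  have EZ2 : ∀ j, ∫ ω, (z ω j) ^ 2 ∂μ = 1 := by
    intro j
    have h := variance_eq_sub (hz2 j)
    rw [hvar j, hmean j] at h
    simp only [Pi.pow_apply] at h
    linarith
  -- E[z_i⁴] = β + 1
  have EZ4 : ∫ ω, (z ω i) ^ 4 ∂μ = β + 1 := by
    have hm2 : MemLp (fun ω => (z ω i) ^ 2) 2 μ := by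
      have := memLp_mul' (hmom4 i) (hmom4 i) (p := 2) ennreal_half_quarter
      simpa [sq] using this
    have h := variance_eq_sub hm2
    rw [hβ i, EZ2 i] at h
    simp only [Pi.pow_apply] at h
    have e : ∫ ω, ((z ω i) ^ 2) ^ 2 ∂μ = ∫ ω, (z ω i) ^ 4 ∂μ := by
      congr 1; funext ω; ring
    rw [e] at h; linarith
  -- E[z_j z_i] = δ_{ji}
  have EZZ : ∀ j, ∫ ω, z ω j * z ω i ∂μ = if j = i then 1 else 0 := by
    intro j
    by_cases hji : j = i
    · subst hji; simp only [if_pos rfl]; rw [← EZ2 j]; congr 1; funext ω; ring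
    · rw [if_neg hji]
      rw [integral_mul_indep' (hzindep.indepFun hji) (hZm j).aestronglyMeasurable
        (hZm i).aestronglyMeasurable, hmean j, zero_mul]
  -- the key z-side fourth-moment coefficients
  have hc : ∀ j k, ∫ ω, z ω j * z ω k * (z ω i) ^ 2 ∂μ
      = if j = k then (if j = i then β + 1 else 1) else 0 := by
    intro j k
    by_cases hjk : j = k
    · subst hjk
      rw [if_pos rfl]
      by_cases hji : j = i
      · subst hji
        rw [if_pos rfl, ← EZ4]; congr 1; funext ω; ring
      · rw [if_neg hji]
        have hind : IndepFun (fun ω => (z ω j) ^ 2) (fun ω => (z ω i) ^ 2) μ :=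
          (hzindep.indepFun hji).comp (measurable_id.pow_const 2) (measurable_id.pow_const 2)
        have e : ∫ ω, z ω j * z ω j * (z ω i) ^ 2 ∂μ
            = ∫ ω, (z ω j) ^ 2 * (z ω i) ^ 2 ∂μ := by
          congr 1; funext ω; ring
        rw [e, integral_mul_indep' hind ((hZm j).pow_const 2).aestronglyMeasurable
          ((hZm i).pow_const 2).aestronglyMeasurable, EZ2, EZ2, one_mul]
    · rw [if_neg hjk]
      by_cases hji : j = i
      · subst hji
        have hkj : k ≠ j := fun h => hjk h.symm
        have hind : IndepFun (fun ω => (z ω j) ^ 3) (fun ω => z ω k) μ :=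
          (hzindep.indepFun hkj.symm).comp (measurable_id.pow_const 3) measurable_id
        have e : ∫ ω, z ω j * z ω k * (z ω j) ^ 2 ∂μ = ∫ ω, (z ω j) ^ 3 * z ω k ∂μ := by
          congr 1; funext ω; ring
        rw [e, integral_mul_indep' hind ((hZm j).pow_const 3).aestronglyMeasurable
          (hZm k).aestronglyMeasurable, hmean k, mul_zero]
      · by_cases hki : k = i
        · subst hki
          have hind : IndepFun (fun ω => z ω j) (fun ω => (z ω k) ^ 3) μ :=
            (hzindep.indepFun hjk).comp measurable_id (measurable_id.pow_const 3)
          have e : ∫ ω, z ω j * z ω k * (z ω k) ^ 2 ∂μ = ∫ ω, z ω j * (z ω k) ^ 3 ∂μ := by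
            congr 1; funext ω; ring
          rw [e, integral_mul_indep' hind (hZm j).aestronglyMeasurable
            ((hZm k).pow_const 3).aestronglyMeasurable, hmean j, zero_mul]
        · have hind0 : IndepFun (fun ω => (z ω k, z ω i)) (fun ω => z ω j) μ :=
            hzindep.indepFun_prodMk (fun n => hZm n) k i j (fun h => hjk h.symm)
              (fun h => hji h.symm)
          have hφ : Measurable (fun p : ℝ × ℝ => p.1 * p.2 ^ 2) :=
            measurable_fst.mul (measurable_snd.pow_const 2)
          have hind : IndepFun (fun ω => z ω k * (z ω i) ^ 2) (fun ω => z ω j) μ :=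
            hind0.comp hφ measurable_id
          have e : ∫ ω, z ω j * z ω k * (z ω i) ^ 2 ∂μ
              = ∫ ω, (z ω k * (z ω i) ^ 2) * z ω j ∂μ := by
            congr 1; funext ω; ring
          rw [e, integral_mul_indep' hind
            ((hZm k).mul ((hZm i).pow_const 2)).aestronglyMeasurable
            (hZm j).aestronglyMeasurable, hmean j, mul_zero]
  -- independence of g-side and z-side statistics
  have hGZ : ∀ (φ ψ : (Fin d → ℝ) → ℝ), Measurable φ → Measurable ψ →
      IndepFun (fun ω => φ (g ω)) (fun ω => ψ (z ω)) μ := fun φ ψ hφ hψ =>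
    hindep.comp hφ hψ
  -- mean of f
  have hgint : ∀ j, Integrable (fun ω => g ω j) μ := fun j => (hg2 j).integrable one_le_two
  have hterm_int : ∀ j, Integrable (fun ω => g ω j * (z ω j * z ω i)) μ := by
    intro j
    exact integrable_mul_indep'
      (hGZ (fun v => v j) (fun v => v j * v i) (measurable_pi_apply j)
        ((measurable_pi_apply j).mul (measurable_pi_apply i)))
      (hgint j) ((hzz j i).integrable one_le_two)
  have Ef : ∫ ω, (∑ j, g ω j * z ω j) * z ω i ∂μ = ∫ ω, g ω i ∂μ := by
    have e : (fun ω => (∑ j, g ω j * z ω j) * z ω i)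
        = fun ω => ∑ j, g ω j * (z ω j * z ω i) := by
      funext ω; rw [Finset.sum_mul]; exact Finset.sum_congr rfl fun j _ => by ring
    rw [e, integral_finset_sum _ (fun j _ => hterm_int j)]
    have e2 : ∀ j, ∫ ω, g ω j * (z ω j * z ω i) ∂μ
        = (∫ ω, g ω j ∂μ) * (if j = i then (1:ℝ) else 0) := by
      intro j
      rw [integral_mul_indep'
        (hGZ (fun v => v j) (fun v => v j * v i) (measurable_pi_apply j)
          ((measurable_pi_apply j).mul (measurable_pi_apply i)))
        (hGm j).aestronglyMeasurable ((hZm j).mul (hZm i)).aestronglyMeasurable, EZZ j]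
    simp only [e2, mul_ite, mul_one, mul_zero, Finset.sum_ite_eq', Finset.mem_univ, if_pos]
  -- integrability of the squared terms
  have hgg_int : ∀ j k, Integrable (fun ω => g ω j * g ω k) μ := fun j k =>
    (memLp_mul' (hg2 j) (hg2 k) ennreal_one_half).integrable le_rfl
  have hzzz_int : ∀ j k, Integrable (fun ω => z ω j * z ω k * (z ω i) ^ 2) μ := by
    intro j k
    have h1 : MemLp (fun ω => (z ω i) ^ 2) 2 μ := by
      have := hzz i i; simpa [sq] using this
    have := memLp_mul' (hzz j k) h1 ennreal_one_half
    exact this.integrable le_rfl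
  have hsq_int : ∀ j k, Integrable (fun ω => (g ω j * g ω k) * (z ω j * z ω k * (z ω i) ^ 2)) μ := by
    intro j k
    exact integrable_mul_indep'
      (hGZ (fun v => v j * v k) (fun v => v j * v k * v i ^ 2)
        ((measurable_pi_apply j).mul (measurable_pi_apply k))
        (((measurable_pi_apply j).mul (measurable_pi_apply k)).mul
          ((measurable_pi_apply i).pow_const 2)))
      (hgg_int j k) (hzzz_int j k)
  -- pointwise expansion of f²
  have hsq_eq : (fun ω => ((∑ j, g ω j * z ω j) * z ω i) ^ 2)
      = fun ω => ∑ j, ∑ k, (g ω j * g ω k) * (z ω j * z ω k * (z ω i) ^ 2) := by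
    funext ω
    rw [mul_pow, sq (∑ j, g ω j * z ω j), Finset.sum_mul_sum, Finset.sum_mul]
    exact Finset.sum_congr rfl fun j _ => by
      rw [Finset.sum_mul]; exact Finset.sum_congr rfl fun k _ => by ring
  -- second moment
  have Ef2 : ∫ ω, ((∑ j, g ω j * z ω j) * z ω i) ^ 2 ∂μ
      = β * ∫ ω, (g ω i) ^ 2 ∂μ + ∑ j, ∫ ω, (g ω j) ^ 2 ∂μ := by
    rw [hsq_eq, integral_finset_sum _ (fun j _ => integrable_finset_sum _ (fun k _ => hsq_int j k))]
    have e1 : ∀ j, ∫ ω, ∑ k, (g ω j * g ω k) * (z ω j * z ω k * (z ω i) ^ 2) ∂μ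
        = ∑ k, ∫ ω, (g ω j * g ω k) * (z ω j * z ω k * (z ω i) ^ 2) ∂μ := fun j =>
      integral_finset_sum _ (fun k _ => hsq_int j k)
    simp only [e1]
    have e2 : ∀ j k, ∫ ω, (g ω j * g ω k) * (z ω j * z ω k * (z ω i) ^ 2) ∂μ
        = (∫ ω, g ω j * g ω k ∂μ) * (if j = k then (if j = i then β + 1 else 1) else 0) := by
      intro j k
      rw [integral_mul_indep'
        (hGZ (fun v => v j * v k) (fun v => v j * v k * v i ^ 2)
          ((measurable_pi_apply j).mul (measurable_pi_apply k))
          (((measurable_pi_apply j).mul (measurable_pi_apply k)).mul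
            ((measurable_pi_apply i).pow_const 2)))
        ((hGm j).mul (hGm k)).aestronglyMeasurable
        (((hZm j).mul (hZm k)).mul ((hZm i).pow_const 2)).aestronglyMeasurable, hc j k]
    simp only [e2]
    have e3 : ∀ j, ∫ ω, g ω j * g ω j ∂μ = ∫ ω, (g ω j) ^ 2 ∂μ := by
      intro j; congr 1; funext ω; ring
    have e5 : ∀ j : Fin d, ∑ k, (∫ ω, g ω j * g ω k ∂μ)
          * (if j = k then (if j = i then β + 1 else 1) else 0)
        = (∫ ω, (g ω j) ^ 2 ∂μ) * (if j = i then β + 1 else 1) := by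
      intro j
      rw [Finset.sum_eq_single j]
      · rw [if_pos rfl, e3]
      · intro k _ hk; rw [if_neg (fun h => hk h.symm), mul_zero]
      · intro h; exact absurd (Finset.mem_univ j) h
    simp only [e5]
    have e4 : ∀ j : Fin d, (if j = i then β + 1 else 1) * ∫ ω, (g ω j) ^ 2 ∂μ
        = (if j = i then β * ∫ ω, (g ω j) ^ 2 ∂μ else 0) + ∫ ω, (g ω j) ^ 2 ∂μ := by
      intro j; by_cases h : j = i <;> simp [h] <;> ring
    calc ∑ j, (∫ ω, (g ω j) ^ 2 ∂μ) * (if j = i then β + 1 else 1)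
        = ∑ j, ((if j = i then β * ∫ ω, (g ω j) ^ 2 ∂μ else 0) + ∫ ω, (g ω j) ^ 2 ∂μ) := by
          refine Finset.sum_congr rfl fun j _ => ?_
          rw [mul_comm, e4 j]
      _ = β * ∫ ω, (g ω i) ^ 2 ∂μ + ∑ j, ∫ ω, (g ω j) ^ 2 ∂μ := by
          rw [Finset.sum_add_distrib, Finset.sum_ite_eq', if_pos (Finset.mem_univ i)]
  -- f is in L²
  have hfm : Measurable (fun ω => (∑ j, g ω j * z ω j) * z ω i) :=
    (Finset.measurable_sum Finset.univ (fun j _ => (hGm j).mul (hZm j))).mul (hZm i)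
  have hfL2 : MemLp (fun ω => (∑ j, g ω j * z ω j) * z ω i) 2 μ := by
    rw [memLp_two_iff_integrable_sq hfm.aestronglyMeasurable]
    rw [hsq_eq]
    exact integrable_finset_sum _ (fun j _ => integrable_finset_sum _ (fun k _ => hsq_int j k))
  -- conclude
  have hv := variance_eq_sub hfL2
  simp only [Pi.pow_apply] at hv
  rw [hv, Ef, Ef2]
  have hvg := variance_eq_sub (hg2 i)
  simp only [Pi.pow_apply] at hvg
  rw [hvg]
  ring
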